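/- Let α_1,…,α_n be pairwise distinct elements of a finite field F_q and let k, r be integers with 6 ≤ 2k ≤ n and 1 ≤ r ≤ k−1. Then G_1 · H_1ᵀ = 0 and the rows of H_1 are linearly independent over F_q; consequently H_1 is a parity check matrix for the code C_1 generated by G_1, i.e. the rows of H_1 form a basis of the dual code C_1^⊥ ⊆ F_q^{n+1}. -/

import Mathlib

open Finset Matrix

/-- Elementary symmetric polynomial `σ_t` evaluated at the values `x 0, …, x (m-1)`. -/
def esymmV {F : Type*} [CommRing F] {m : ℕ} (t : ℕ) (x : Fin m → F) : F :=
  ∑ A ∈ Finset.univ.powersetCard t, ∏ i ∈ A, x i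

/-- Complete homogeneous symmetric polynomial `S_t` evaluated at `x 0, …, x (m-1)`. -/
def hsymmV {F : Type*} [CommRing F] {m : ℕ} (t : ℕ) (x : Fin m → F) : F :=
  ∑ d ∈ Finset.Nat.antidiagonalTuple m t, ∏ i, x i ^ d i

/-- The exponent of the `i`-th row (0-indexed): the elements of
`{0,…,k−r−1} ∪ {k−r+1,…,k}` in increasing order. -/
def expo (k r : ℕ) (i : Fin k) : ℕ := if (i : ℕ) < k - r then (i : ℕ) else (i : ℕ) + 1

/-- The Vandermonde product `∏_{i<j} (α_j − α_i)`. -/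
def vand {F : Type*} [CommRing F] {n : ℕ} (α : Fin n → F) : F :=
  ∏ i : Fin n, ∏ j ∈ Finset.Ioi i, (α j - α i)

/-- The matrix `G_{r,k}`: rows are `(α_1^e, …, α_n^e)` for
`e ∈ {0,…,k−r−1} ∪ {k−r+1,…,k}` in increasing order. -/
def Grk {F : Type*} [Field F] {n : ℕ} (α : Fin n → F) (k r : ℕ) : Matrix (Fin k) (Fin n) F :=
  Matrix.of fun i j => α j ^ expo k r i

/-- The matrix `G_1`: `G_{r,k}` with the extra column `(0,…,0,1)ᵀ` appended. -/
def G1 {F : Type*} [Field F] {n : ℕ} (α : Fin n → F) (k r : ℕ) :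
    Matrix (Fin k) (Fin (n + 1)) F :=
  Matrix.of fun i j =>
    if hj : (j : ℕ) < n then α ⟨j, hj⟩ ^ expo k r i
    else if (i : ℕ) = k - 1 then 1 else 0

/-- The matrix `G_2`: `G_1` with the extra column `(0,…,0,1,δ)ᵀ` appended
(entry `1` in row `k−1`, i.e. index `k−2`, and `δ` in row `k`, i.e. index `k−1`). -/
def G2 {F : Type*} [Field F] {n : ℕ} (α : Fin n → F) (k r : ℕ) (δ : F) :
    Matrix (Fin k) (Fin (n + 2)) F :=
  Matrix.of fun i j =>
    if hj : (j : ℕ) < n then α ⟨j, hj⟩ ^ expo k r i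
    else if (j : ℕ) = n then (if (i : ℕ) = k - 1 then 1 else 0)
    else (if (i : ℕ) = k - 2 then 1 else if (i : ℕ) = k - 1 then δ else 0)

/-- `u_i = ∏_{j ≠ i} (α_i − α_j)⁻¹`. -/
def uCoef {F : Type*} [Field F] {n : ℕ} (α : Fin n → F) (i : Fin n) : F :=
  ∏ j ∈ Finset.univ.erase i, (α i - α j)⁻¹

/-- `Λ_{r,i} = ∑_{j=0}^{r} (−1)^j σ_j α_i^{(n−k)+(r−1)−j}`. -/
def Lam {F : Type*} [Field F] {n : ℕ} (α : Fin n → F) (k r : ℕ) (i : Fin n) : F :=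
  ∑ j ∈ Finset.range (r + 1), (-1 : F) ^ j * esymmV j α * α i ^ ((n - k) + (r - 1) - j)

/-- Every `k×k` submatrix of `G` is nonsingular. -/
def allSubNonsing {F : Type*} [Field F] {k m : ℕ} (G : Matrix (Fin k) (Fin m) F) : Prop :=
  ∀ c : Fin k → Fin m, Function.Injective c → (G.submatrix id c).det ≠ 0

/-- The linear code spanned by the rows of `G`. -/
def rowSpan {F : Type*} [Field F] {k m : ℕ} (G : Matrix (Fin k) (Fin m) F) :
    Submodule F (Fin m → F) :=
  Submodule.span F (Set.range fun i => G i)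

/-- The dual code `C^⊥ = {x : ∑ x_i c_i = 0 for all c ∈ C}`, as a set. -/
def dualSet {F : Type*} [Field F] {m : ℕ} (C : Set (Fin m → F)) : Set (Fin m → F) :=
  {x | ∀ c ∈ C, ∑ i, x i * c i = 0}

/-- The extended code of `C` with respect to `w`. -/
def extCode {F : Type*} [Field F] {m : ℕ} (C : Set (Fin m → F)) (w : Fin m → F) :
    Set (Fin (m + 1) → F) :=
  {y | ∃ c ∈ C, (∀ i : Fin m, y (Fin.castSucc i) = c i) ∧ y (Fin.last m) = ∑ i, w i * c i}

/-- The parity check matrix `H_{r,k}`: the first `n−k−1` rows are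
`(u_1 α_1^e, …, u_n α_n^e)` for `e = 0,…,n−k−2` and the last row is
`(u_1 Λ_{r,1}, …, u_n Λ_{r,n})`. -/
def Hrk {F : Type*} [Field F] {n : ℕ} (α : Fin n → F) (k r : ℕ) :
    Matrix (Fin (n - k)) (Fin n) F :=
  Matrix.of fun i j =>
    if (i : ℕ) < n - k - 1 then uCoef α j * α j ^ (i : ℕ)
    else uCoef α j * Lam α k r j

/-- The parity check matrix `H_1`. -/
def H1 {F : Type*} [Field F] {n : ℕ} (α : Fin n → F) (k r : ℕ) :
    Matrix (Fin (n - k + 1)) (Fin (n + 1)) F :=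
  Matrix.of fun i j =>
    if hj : (j : ℕ) < n then
      (if (i : ℕ) < n - k - 1 then uCoef α ⟨j, hj⟩ * α ⟨j, hj⟩ ^ (i : ℕ)
       else if (i : ℕ) = n - k - 1 then uCoef α ⟨j, hj⟩ * Lam α k r ⟨j, hj⟩
       else uCoef α ⟨j, hj⟩ * α ⟨j, hj⟩ ^ (n - k - 1))
    else (if (i : ℕ) = n - k then -1 else 0)

/-- The parity check matrix `H_2` (case `2 ≤ r`), with parameter `b`. -/
def H2 {F : Type*} [Field F] {n : ℕ} (α : Fin n → F) (k r : ℕ) (b : F) :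
    Matrix (Fin (n - k + 2)) (Fin (n + 2)) F :=
  Matrix.of fun i j =>
    if hj : (j : ℕ) < n then
      (if (i : ℕ) < n - k - 1 then uCoef α ⟨j, hj⟩ * α ⟨j, hj⟩ ^ (i : ℕ)
       else if (i : ℕ) = n - k - 1 then uCoef α ⟨j, hj⟩ * Lam α k r ⟨j, hj⟩
       else if (i : ℕ) = n - k then uCoef α ⟨j, hj⟩ * α ⟨j, hj⟩ ^ (n - k - 1)
       else uCoef α ⟨j, hj⟩ * α ⟨j, hj⟩ ^ (n - k))
    else if (j : ℕ) = n then
      (if (i : ℕ) = n - k then -1 else if (i : ℕ) = n - k + 1 then b else 0)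
    else (if (i : ℕ) = n - k + 1 then -1 else 0)


section Aux

open Polynomial

variable {F : Type*} [Field F] {n : ℕ} {α : Fin n → F}

lemma uCoef_ne_zero (hα : Function.Injective α) (i : Fin n) : uCoef α i ≠ 0 := by
  refine Finset.prod_ne_zero_iff.2 fun j hj => ?_
  have : α i ≠ α j := fun h => (Finset.mem_erase.1 hj).1.symm (hα h)
  exact inv_ne_zero (sub_ne_zero.2 this)

lemma lagrange_basis_eq (i : Fin n) :
    Lagrange.basis Finset.univ α i
      = C (uCoef α i) * ∏ j ∈ Finset.univ.erase i, (X - C (α j)) := by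
  rw [Lagrange.basis, uCoef, map_prod, ← Finset.prod_mul_distrib]
  rfl

lemma coeff_lagrange_basis (hn : 1 ≤ n) (i : Fin n) :
    (Lagrange.basis Finset.univ α i).coeff (n - 1) = uCoef α i := by
  rw [lagrange_basis_eq, coeff_C_mul]
  have hm : (∏ j ∈ Finset.univ.erase i, (X - C (α j))).Monic :=
    monic_prod_of_monic _ _ fun j _ => monic_X_sub_C _
  have hd : (∏ j ∈ Finset.univ.erase i, (X - C (α j))).natDegree = n - 1 := by
    rw [natDegree_prod_of_monic _ _ fun j _ => monic_X_sub_C _]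
    simp [Finset.card_erase_of_mem]
  have := hm.coeff_natDegree
  rw [hd] at this
  rw [this, mul_one]

/-- The key "power sum of Lagrange weights" identity. -/
lemma sum_u_pow (hα : Function.Injective α) {m : ℕ} (hm : m < n) :
    ∑ i, uCoef α i * α i ^ m = if m = n - 1 then 1 else 0 := by
  have hn : 1 ≤ n := Nat.one_le_of_lt (Nat.lt_of_le_of_lt (Nat.zero_le m) hm)
  have hcard : (Finset.univ : Finset (Fin n)).card = n := by simp
  have hdeg : ((X : F[X]) ^ m).degree < (Finset.univ : Finset (Fin n)).card := by
    rw [degree_X_pow, hcard]; exact_mod_cast hm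
  have h := Lagrange.eq_interpolate (f := (X : F[X]) ^ m)
    (Set.injOn_of_injective hα) hdeg
  have h2 := congrArg (fun p => Polynomial.coeff p (n - 1)) h
  simp only [Lagrange.interpolate_apply, finset_sum_coeff, coeff_C_mul,
    eval_pow, eval_X, coeff_X_pow] at h2
  rw [Finset.sum_congr rfl (fun i _ => by
    rw [coeff_lagrange_basis hn i])] at h2
  rw [Finset.sum_congr rfl (fun i (_ : i ∈ Finset.univ) => mul_comm (α i ^ m) (uCoef α i))] at h2
  rw [← h2]
  by_cases hmn : m = n - 1
  · simp [hmn]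
  · have h' : ¬ (n - 1 = m) := fun h => hmn h.symm
    simp [h', hmn]

lemma esymmV_eq_multiset_esymm (t : ℕ) :
    esymmV t α = Multiset.esymm (Finset.univ.val.map α) t := by
  rw [Finset.esymm_map_val]; rfl

lemma esymm_poly_eval (x : F) :
    ∑ t ∈ Finset.range (n + 1), (-1 : F) ^ t * esymmV t α * x ^ (n - t)
      = ∏ i, (x - α i) := by
  have h := Multiset.prod_X_sub_X_eq_sum_esymm (Finset.univ.val.map α)
  have hcard : Multiset.card (Finset.univ.val.map α) = n := by simp
  have h2 := congrArg (Polynomial.eval x) h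
  rw [Polynomial.eval_multiset_prod, Multiset.map_map, Multiset.map_map] at h2
  rw [Polynomial.eval_finset_sum] at h2
  simp only [hcard, Polynomial.eval_mul, Polynomial.eval_pow, Polynomial.eval_neg,
    Polynomial.eval_one, Polynomial.eval_C, Polynomial.eval_sub, Polynomial.eval_X] at h2
  calc ∑ t ∈ Finset.range (n + 1), (-1 : F) ^ t * esymmV t α * x ^ (n - t)
      = ∑ t ∈ Finset.range (n + 1),
          (-1 : F) ^ t * ((Finset.univ.val.map α).esymm t * x ^ (n - t)) := by
        refine Finset.sum_congr rfl fun t _ => by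
          rw [esymmV_eq_multiset_esymm, mul_assoc]
    _ = (Multiset.map ((Polynomial.eval x ∘ fun t => Polynomial.X - Polynomial.C t) ∘ α)
          Finset.univ.val).prod := h2.symm
    _ = ∏ i, (x - α i) := by
        rw [Finset.prod_eq_multiset_prod]
        refine congrArg _ (Multiset.map_congr rfl ?_)
        intro i _
        simp

lemma esymm_alt_zero (j : Fin n) :
    ∑ t ∈ Finset.range (n + 1), (-1 : F) ^ t * esymmV t α * α j ^ (n - t) = 0 := by
  rw [esymm_poly_eval]
  exact Finset.prod_eq_zero (Finset.mem_univ j) (sub_self _)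

lemma sum_u_lam (hα : Function.Injective α) (k r : ℕ)
    (hk : 3 ≤ k) (hkn : 2 * k ≤ n) (hr1 : 1 ≤ r) (hrk : r ≤ k - 1)
    {e : ℕ} (he : e ≤ k) (hne : e ≠ k - r) :
    ∑ j, uCoef α j * α j ^ e * Lam α k r j = 0 := by
  set D := (n - k) + (r - 1) with hD
  have hDval : D = n - k + r - 1 := by omega
  have hrD : r ≤ D := by omega
  have hswap : ∑ j, uCoef α j * α j ^ e * Lam α k r j
      = ∑ t ∈ Finset.range (r + 1),
          (-1 : F) ^ t * esymmV t α * ∑ j, uCoef α j * α j ^ (e + (D - t)) := by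
    simp_rw [Lam, Finset.mul_sum]
    rw [Finset.sum_comm]
    refine Finset.sum_congr rfl fun t _ => Finset.sum_congr rfl fun j _ => ?_
    rw [← hD, pow_add]; ring
  rw [hswap]
  rcases Nat.lt_or_ge e (k - r) with hlt | hge
  · -- small exponent case: every inner sum vanishes
    refine Finset.sum_eq_zero fun t _ => ?_
    have h1 : e + (D - t) < n := by omega
    have h2 : e + (D - t) ≠ n - 1 := by omega
    rw [sum_u_pow hα h1, if_neg h2, mul_zero]
  · -- large exponent case
    have hge' : k - r + 1 ≤ e := by omega
    set c := e + D - n with hc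
    have hkey : ∀ t ∈ Finset.range (r + 1), e + (D - t) = c + (n - t) := by
      intro t ht
      have := Finset.mem_range.1 ht
      omega
    have hfull : ∑ t ∈ Finset.range (n + 1),
        (-1 : F) ^ t * esymmV t α * ∑ j, uCoef α j * α j ^ (c + (n - t)) = 0 := by
      have hstep : ∀ t : ℕ, (-1 : F) ^ t * esymmV t α *
            ∑ j, uCoef α j * α j ^ (c + (n - t))
          = ∑ j, uCoef α j * α j ^ c * ((-1 : F) ^ t * esymmV t α * α j ^ (n - t)) := by
        intro t
        rw [Finset.mul_sum]
        refine Finset.sum_congr rfl fun j _ => ?_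
        rw [pow_add]; ring
      simp_rw [hstep]
      rw [Finset.sum_comm]
      refine Finset.sum_eq_zero fun j _ => ?_
      rw [← Finset.mul_sum, esymm_alt_zero, mul_zero]
    have hsplit : ∑ t ∈ Finset.range (r + 1),
          (-1 : F) ^ t * esymmV t α * ∑ j, uCoef α j * α j ^ (c + (n - t))
        + ∑ t ∈ Finset.Ico (r + 1) (n + 1),
          (-1 : F) ^ t * esymmV t α * ∑ j, uCoef α j * α j ^ (c + (n - t))
        = ∑ t ∈ Finset.range (n + 1),
          (-1 : F) ^ t * esymmV t α * ∑ j, uCoef α j * α j ^ (c + (n - t)) := by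
      simp only [Finset.range_eq_Ico]
      exact Finset.sum_Ico_consecutive _ (by omega) (by omega)
    have htail : ∑ t ∈ Finset.Ico (r + 1) (n + 1),
        (-1 : F) ^ t * esymmV t α * ∑ j, uCoef α j * α j ^ (c + (n - t)) = 0 := by
      refine Finset.sum_eq_zero fun t ht => ?_
      have ht' := Finset.mem_Ico.1 ht
      have h1 : c + (n - t) < n := by omega
      have h2 : c + (n - t) ≠ n - 1 := by omega
      rw [sum_u_pow hα h1, if_neg h2, mul_zero]
    have := hsplit.trans hfull
    rw [htail, add_zero] at this
    rw [← this]
    exact Finset.sum_congr rfl fun t ht => by rw [hkey t ht]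

lemma expo_lt_k1 (k r : ℕ) (i : Fin k) : expo k r i ≤ k := by
  have := i.isLt; unfold expo; split <;> omega

lemma expo_injective (k r : ℕ) : Function.Injective (expo k r) := by
  intro i j h
  unfold expo at h
  apply Fin.ext
  split at h <;> split at h <;> omega

lemma poly_vanish (hα : Function.Injective α) (P : Polynomial F)
    (hdeg : P.natDegree < n) (hev : ∀ j, P.eval (α j) = 0) : P = 0 :=
  P.eq_zero_of_natDegree_lt_card_of_eval_eq_zero hα hev (by simpa using hdeg)

end Aux

/-- Theorem 4.2: `H_1` is a parity check matrix for the code `C_1` generated by `G_1`. -/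
theorem H1_parity_check {F : Type*} [Field F] [Fintype F] {n : ℕ}
    (α : Fin n → F) (hα : Function.Injective α) (k r : ℕ)
    (h6 : 6 ≤ 2 * k) (hkn : 2 * k ≤ n) (hr1 : 1 ≤ r) (hrk : r ≤ k - 1) :
    G1 α k r * (H1 α k r)ᵀ = 0 ∧
    LinearIndependent F (fun i => H1 α k r i) ∧
    (rowSpan (H1 α k r) : Set (Fin (n + 1) → F))
      = dualSet (rowSpan (G1 α k r) : Set (Fin (n + 1) → F)) := by
  have hk3 : 3 ≤ k := by omega
  have hnk : k + 3 ≤ n := by omega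
  -- column entries of G1 and H1
  have hG1c : ∀ (a : Fin k) (j : Fin n),
      G1 α k r a (Fin.castSucc j) = α j ^ expo k r a := by
    intro a j
    simp [G1]
  have hG1l : ∀ (a : Fin k),
      G1 α k r a (Fin.last n) = if (a : ℕ) = k - 1 then 1 else 0 := by
    intro a
    simp [G1]
  have hH1c : ∀ (i : Fin (n - k + 1)) (j : Fin n),
      H1 α k r i (Fin.castSucc j) =
        (if (i : ℕ) < n - k - 1 then uCoef α j * α j ^ (i : ℕ)
         else if (i : ℕ) = n - k - 1 then uCoef α j * Lam α k r j
         else uCoef α j * α j ^ (n - k - 1)) := by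
    intro i j
    simp [H1]
  have hH1l : ∀ (i : Fin (n - k + 1)),
      H1 α k r i (Fin.last n) = if (i : ℕ) = n - k then -1 else 0 := by
    intro i
    simp [H1]
  -- Part 1: orthogonality
  have hGH : G1 α k r * (H1 α k r)ᵀ = 0 := by
    ext a i
    rw [Matrix.mul_apply, Matrix.zero_apply]
    simp only [Matrix.transpose_apply]
    rw [Fin.sum_univ_castSucc]
    simp only [hG1c, hG1l, hH1c, hH1l]
    have hexp := expo_lt_k1 k r a
    have hiv := i.isLt
    rcases Nat.lt_trichotomy (i : ℕ) (n - k - 1) with hi | hi | hi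
    · rw [if_neg (by omega : ¬ (i : ℕ) = n - k), mul_zero, add_zero]
      have hz : ∀ j : Fin n, α j ^ expo k r a *
          (if (i : ℕ) < n - k - 1 then uCoef α j * α j ^ (i : ℕ)
           else if (i : ℕ) = n - k - 1 then uCoef α j * Lam α k r j
           else uCoef α j * α j ^ (n - k - 1))
          = uCoef α j * α j ^ (expo k r a + (i : ℕ)) := by
        intro j
        rw [if_pos hi, pow_add]; ring
      rw [Finset.sum_congr rfl fun j _ => hz j, sum_u_pow hα (by omega),
        if_neg (by omega)]
    · rw [if_neg (by omega : ¬ (i : ℕ) = n - k), mul_zero, add_zero]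
      have hz : ∀ j : Fin n, α j ^ expo k r a *
          (if (i : ℕ) < n - k - 1 then uCoef α j * α j ^ (i : ℕ)
           else if (i : ℕ) = n - k - 1 then uCoef α j * Lam α k r j
           else uCoef α j * α j ^ (n - k - 1))
          = uCoef α j * α j ^ expo k r a * Lam α k r j := by
        intro j
        rw [if_neg (by omega), if_pos hi]; ring
      rw [Finset.sum_congr rfl fun j _ => hz j]
      refine sum_u_lam hα k r hk3 hkn hr1 hrk hexp ?_
      unfold expo; split <;> omega
    · have hi' : (i : ℕ) = n - k := by omega
      rw [if_pos hi']
      have hz : ∀ j : Fin n, α j ^ expo k r a *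
          (if (i : ℕ) < n - k - 1 then uCoef α j * α j ^ (i : ℕ)
           else if (i : ℕ) = n - k - 1 then uCoef α j * Lam α k r j
           else uCoef α j * α j ^ (n - k - 1))
          = uCoef α j * α j ^ (expo k r a + (n - k - 1)) := by
        intro j
        rw [if_neg (by omega), if_neg (by omega), pow_add]; ring
      rw [Finset.sum_congr rfl fun j _ => hz j, sum_u_pow hα (by omega)]
      by_cases ha : (a : ℕ) = k - 1
      · have hae : expo k r a = k := by
          unfold expo; have := a.isLt; split <;> omega
        rw [if_pos ha, if_pos (by omega), one_mul]; ring
      · have hae : expo k r a ≤ k - 1 := by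
          unfold expo; have := a.isLt; split <;> omega
        rw [if_neg ha, if_neg (by omega), zero_mul]; ring
  -- Linear independence of the rows of G1
  have hG1LI : LinearIndependent F (fun i => G1 α k r i) := by
    rw [Fintype.linearIndependent_iff]
    intro g hg b
    set P : Polynomial F := ∑ a : Fin k, Polynomial.C (g a) * Polynomial.X ^ expo k r a
      with hP
    have hPdeg : P.natDegree < n := by
      refine lt_of_le_of_lt (Polynomial.natDegree_sum_le_of_forall_le _ _ fun a _ => ?_)
        (by omega : k < n)
      exact le_trans (Polynomial.natDegree_C_mul_le _ _)
        (by rw [Polynomial.natDegree_X_pow]; exact expo_lt_k1 k r a)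
    have hPev : ∀ j : Fin n, P.eval (α j) = 0 := by
      intro j
      have := congrFun hg (Fin.castSucc j)
      simp only [Finset.sum_apply, Pi.smul_apply, smul_eq_mul, Pi.zero_apply, hG1c] at this
      rw [hP, Polynomial.eval_finset_sum]
      simpa using this
    have hP0 : P = 0 := poly_vanish hα P hPdeg hPev
    have := congrArg (fun Q => Polynomial.coeff Q (expo k r b)) hP0
    simp only [hP, Polynomial.finset_sum_coeff, Polynomial.coeff_C_mul,
      Polynomial.coeff_X_pow, Polynomial.coeff_zero] at this
    rwa [Finset.sum_eq_single b
      (fun a _ ha => by rw [if_neg (fun h => ha (expo_injective k r h.symm)), mul_zero])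
      (fun h => absurd (Finset.mem_univ b) h), if_pos rfl, mul_one] at this
  -- Part 2: linear independence of the rows of H1
  have hH1LI : LinearIndependent F (fun i => H1 α k r i) := by
    rw [Fintype.linearIndependent_iff]
    intro g hg
    set D := (n - k) + (r - 1) with hD
    set LP : Polynomial F := ∑ t ∈ Finset.range (r + 1),
      Polynomial.C ((-1 : F) ^ t * esymmV t α) * Polynomial.X ^ (D - t) with hLP
    set R : Fin (n - k + 1) → Polynomial F := fun i =>
      if (i : ℕ) < n - k - 1 then Polynomial.X ^ (i : ℕ)
      else if (i : ℕ) = n - k - 1 then LP else Polynomial.X ^ (n - k - 1) with hR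
    set P := ∑ i, Polynomial.C (g i) * R i with hP
    have hLdeg : LP.natDegree ≤ D := by
      refine Polynomial.natDegree_sum_le_of_forall_le _ _ fun t _ => ?_
      exact le_trans (Polynomial.natDegree_C_mul_le _ _)
        (by rw [Polynomial.natDegree_X_pow]; omega)
    have hRdeg : ∀ i, (R i).natDegree ≤ D := by
      intro i
      have hi := i.isLt
      simp only [hR]
      split_ifs with h1 h2
      · rw [Polynomial.natDegree_X_pow]; omega
      · exact hLdeg
      · rw [Polynomial.natDegree_X_pow]; omega
    have hPdeg : P.natDegree < n := by
      refine lt_of_le_of_lt (Polynomial.natDegree_sum_le_of_forall_le _ _ fun i _ =>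
        le_trans (Polynomial.natDegree_C_mul_le _ _) (hRdeg i)) (by omega : D < n)
    have hLev : ∀ j : Fin n, LP.eval (α j) = Lam α k r j := by
      intro j
      rw [hLP, Polynomial.eval_finset_sum, Lam]
      simp [mul_assoc, hD]
    have hRev : ∀ (i : Fin (n - k + 1)) (j : Fin n),
        H1 α k r i (Fin.castSucc j) = uCoef α j * (R i).eval (α j) := by
      intro i j
      rw [hH1c]
      simp only [hR]
      split_ifs with h1 h2 <;> simp [hLev j]
    have hPev : ∀ j : Fin n, P.eval (α j) = 0 := by
      intro j
      have h0 := congrFun hg (Fin.castSucc j)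
      simp only [Finset.sum_apply, Pi.smul_apply, smul_eq_mul, Pi.zero_apply] at h0
      have h1 : uCoef α j * P.eval (α j) = 0 := by
        rw [hP, Polynomial.eval_finset_sum, Finset.mul_sum, ← h0]
        refine Finset.sum_congr rfl fun i _ => ?_
        rw [hRev i j]
        simp only [Polynomial.eval_mul, Polynomial.eval_C]
        ring
      exact (mul_eq_zero.1 h1).resolve_left (uCoef_ne_zero hα j)
    have hP0 := poly_vanish hα P hPdeg hPev
    have hcoeff : ∀ m, ∑ i, g i * (R i).coeff m = 0 := by
      intro m
      have := congrArg (fun Q => Polynomial.coeff Q m) hP0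
      simpa [hP, Polynomial.finset_sum_coeff, Polynomial.coeff_C_mul] using this
    have hLcD : LP.coeff D = 1 := by
      rw [hLP, Polynomial.finset_sum_coeff]
      rw [Finset.sum_eq_single 0 (fun t ht ht0 => by
        have := Finset.mem_range.1 ht
        rw [Polynomial.coeff_C_mul, Polynomial.coeff_X_pow, if_neg (by omega), mul_zero])
        (fun h => absurd (Finset.mem_range.2 (by omega)) h)]
      rw [Polynomial.coeff_C_mul, Polynomial.coeff_X_pow, if_pos (by omega)]
      have : esymmV 0 α = 1 := by simp [esymmV]
      rw [this]; ring
    have hgb0 : g ⟨n - k - 1, by omega⟩ = 0 := by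
      have h0 := hcoeff D
      rw [Finset.sum_eq_single (⟨n - k - 1, by omega⟩ : Fin (n - k + 1))
        (fun a _ ha => ?_) (fun h => absurd (Finset.mem_univ _) h)] at h0
      · simp only [hR] at h0
        rw [if_neg (by simp), if_pos (by simp), hLcD, mul_one] at h0
        exact h0
      · simp only [hR]
        split_ifs with h1 h2
        · rw [Polynomial.coeff_X_pow, if_neg (by omega), mul_zero]
        · exact absurd (Fin.ext h2) ha
        · rw [Polynomial.coeff_X_pow, if_neg (by omega), mul_zero]
    intro b
    have hbv := b.isLt
    rcases Nat.lt_trichotomy (b : ℕ) (n - k - 1) with hb | hb | hb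
    · have h0 := hcoeff (b : ℕ)
      rw [Finset.sum_eq_single b (fun a _ ha => ?_)
        (fun h => absurd (Finset.mem_univ _) h)] at h0
      · simp only [hR] at h0
        rw [if_pos hb, Polynomial.coeff_X_pow, if_pos rfl, mul_one] at h0
        exact h0
      · simp only [hR]
        have hav := a.isLt
        split_ifs with h1 h2
        · rw [Polynomial.coeff_X_pow,
            if_neg (fun h => ha (Fin.ext (h.symm : (a : ℕ) = (b : ℕ)))), mul_zero]
        · have : a = (⟨n - k - 1, by omega⟩ : Fin (n - k + 1)) := Fin.ext h2
          rw [this, hgb0, zero_mul]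
        · rw [Polynomial.coeff_X_pow, if_neg (by omega), mul_zero]
    · have : b = (⟨n - k - 1, by omega⟩ : Fin (n - k + 1)) := Fin.ext hb
      rw [this]; exact hgb0
    · have hb' : (b : ℕ) = n - k := by omega
      have h0 := hcoeff (n - k - 1)
      rw [Finset.sum_eq_single b (fun a _ ha => ?_)
        (fun h => absurd (Finset.mem_univ _) h)] at h0
      · simp only [hR] at h0
        rw [if_neg (by omega), if_neg (by omega), Polynomial.coeff_X_pow,
          if_pos rfl, mul_one] at h0
        exact h0
      · simp only [hR]
        have hav := a.isLt
        split_ifs with h1 h2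
        · rw [Polynomial.coeff_X_pow, if_neg (by omega), mul_zero]
        · have : a = (⟨n - k - 1, by omega⟩ : Fin (n - k + 1)) := Fin.ext h2
          rw [this, hgb0, zero_mul]
        · exact absurd (Fin.ext (by omega : (a : ℕ) = (b : ℕ))) ha
  -- Part 3
  have hdual : (rowSpan (H1 α k r) : Set (Fin (n + 1) → F))
      = dualSet (rowSpan (G1 α k r) : Set (Fin (n + 1) → F)) := by
    set K := LinearMap.ker (Matrix.mulVecLin (G1 α k r)) with hK
    have hker : dualSet (rowSpan (G1 α k r) : Set (Fin (n + 1) → F)) = (K : Set _) := by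
      ext x
      constructor
      · intro hx
        simp only [SetLike.mem_coe, hK, LinearMap.mem_ker]
        funext a
        have := hx (G1 α k r a) (Submodule.subset_span ⟨a, rfl⟩)
        simpa [Matrix.mulVecLin_apply, Matrix.mulVec, dotProduct, mul_comm] using this
      · intro hx c hc
        simp only [SetLike.mem_coe, hK, LinearMap.mem_ker] at hx
        induction hc using Submodule.span_induction with
        | mem c hcm =>
          obtain ⟨a, rfl⟩ := hcm
          have := congrFun hx a
          simpa [Matrix.mulVecLin_apply, Matrix.mulVec, dotProduct, mul_comm] using this
        | zero => simp
        | add c d _ _ hc hd => simp [mul_add, Finset.sum_add_distrib, hc, hd]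
        | smul t c _ hc =>
          simp only [Pi.smul_apply, smul_eq_mul]
          rw [Finset.sum_congr rfl fun i _ => (by ring : x i * (t * c i) = t * (x i * c i))]
          rw [← Finset.mul_sum, hc, mul_zero]
    have hle : rowSpan (H1 α k r) ≤ K := by
      rw [rowSpan, Submodule.span_le]
      rintro - ⟨i, rfl⟩
      simp only [SetLike.mem_coe, hK, LinearMap.mem_ker]
      funext a
      have := congrFun (congrFun hGH a) i
      rw [Matrix.mul_apply] at this
      simpa [Matrix.mulVecLin_apply, Matrix.mulVec, dotProduct] using this
    have hfinK : Module.finrank F K = n + 1 - k := by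
      have h1 := LinearMap.finrank_range_add_finrank_ker (Matrix.mulVecLin (G1 α k r))
      have h2 : Module.finrank F (LinearMap.range (Matrix.mulVecLin (G1 α k r))) = k := by
        have := LinearIndependent.rank_matrix (M := G1 α k r) hG1LI
        simpa [Matrix.rank] using this
      have h3 : Module.finrank F (Fin (n + 1) → F) = n + 1 := by simp
      rw [h2, h3, ← hK] at h1
      omega
    have hfinH : Module.finrank F (rowSpan (H1 α k r)) = n - k + 1 := by
      rw [rowSpan]
      have := finrank_span_eq_card hH1LI
      simpa using this
    have : rowSpan (H1 α k r) = K :=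
      Submodule.eq_of_le_of_finrank_le hle (by omega)
    rw [this, hker]
  exact ⟨hGH, hH1LI, hdual⟩
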